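/- Let h = h_{1,1} and t be the Prouhet–Thue–Morse sequence. Then for every k ∈ ℕ and every positive integer n, ∑_{i=0}^{2^k - 1} t_i · h(2^{k+1} n + 2^k - 2i) = n + 1. -/

import Mathlib

lemma pairSum (g : ℕ → ℤ) : ∀ N : ℕ,
    ∑ i ∈ Finset.range (2 * N), g i = ∑ j ∈ Finset.range N, (g (2 * j) + g (2 * j + 1)) := by
  intro N
  induction N with
  | zero => simp
  | succ N ih =>
    have : 2 * (N + 1) = (2 * N + 1) + 1 := by ring
    rw [this, Finset.sum_range_succ, Finset.sum_range_succ, Finset.sum_range_succ, ih]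
    ring

/-- For every `k ∈ ℕ` and positive integer `n`,
`∑_{i=0}^{2^k - 1} t i * h (2^{k+1} n + 2^k - 2i) = n + 1`, where `h = h_{1,1}` and
`t` is the Prouhet–Thue–Morse sequence. -/
theorem stmt3 (h : ℤ → ℕ)
    (hinit : ∀ n : ℤ, n ≤ 1 → h n = 1)
    (hrec : ∀ n : ℤ, 2 ≤ n → h n = h (n - (h (n - 1) : ℤ)) + h (n - 2))
    (t : ℕ → ℤ) (ht0 : t 0 = 1)
    (hte : ∀ n : ℕ, t (2 * n) = t n) (hto : ∀ n : ℕ, t (2 * n + 1) = - t n) :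
    ∀ k : ℕ, ∀ n : ℕ, 1 ≤ n →
      ∑ i ∈ Finset.range (2 ^ k),
        t i * (h (2 ^ (k + 1) * (n : ℤ) + 2 ^ k - 2 * i) : ℤ) = (n : ℤ) + 1 := by
  -- h is everywhere ≥ 1
  have h1 : ∀ m : ℤ, 1 ≤ h m := by
    have aux : ∀ N : ℕ, ∀ m : ℤ, m ≤ (N : ℤ) → 1 ≤ h m := by
      intro N
      induction N with
      | zero => intro m hm; rw [hinit m (by omega)]
      | succ N ih =>
        intro m hm
        rcases le_or_gt m (N : ℤ) with h' | h'
        · exact ih m h'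
        · rcases le_or_gt m 1 with h2 | h2
          · rw [hinit m h2]
          · rw [hrec m (by omega)]
            have := ih (m - 2) (by omega)
            omega
    intro m
    rcases le_or_gt m 0 with h' | h'
    · exact aux 0 m (by omega)
    · exact aux m.toNat m (by omega)
  -- h m ≥ 2 for m ≥ 2
  have h2 : ∀ m : ℤ, 2 ≤ m → 2 ≤ h m := by
    intro m hm
    rw [hrec m hm]
    have := h1 (m - (h (m - 1) : ℤ))
    have := h1 (m - 2)
    omega
  -- joint structural facts
  have key : ∀ n : ℕ, h (2 * (n : ℤ) + 1) = n + 1 ∧ 2 * n ≤ h (2 * (n : ℤ)) ∧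
      h (2 * (n : ℤ) + 2) = h (2 * (n : ℤ)) + h ((n : ℤ) + 1) := by
    intro n
    induction n using Nat.strong_induction_on with
    | _ n ih =>
      match n with
      | 0 =>
        have e0 : h 0 = 1 := hinit 0 (by norm_num)
        have e1 : h 1 = 1 := hinit 1 le_rfl
        have e2 : h 2 = 2 := by
          rw [hrec 2 le_rfl]
          norm_num [e1, e0]
        refine ⟨by simpa using e1, by simp, ?_⟩
        norm_num [e2, e0, e1]
      | m + 1 =>
        obtain ⟨A, B, C⟩ := ih m (Nat.lt_succ_self m)
        have hcast : ((m + 1 : ℕ) : ℤ) = (m : ℤ) + 1 := by push_cast; ring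
        -- h(2(m+1)) = h(2m) + h(m+1)
        have hC : h (2 * ((m : ℤ) + 1)) = h (2 * (m : ℤ)) + h ((m : ℤ) + 1) := by
          have : 2 * ((m : ℤ) + 1) = 2 * (m : ℤ) + 2 := by ring
          rw [this, C]
        -- G2 : h(2(m+1)) ≥ 2(m+1)
        have G2 : 2 * (m + 1) ≤ h (2 * ((m : ℤ) + 1)) := by
          rcases Nat.eq_zero_or_pos m with rfl | hm
          · have e0 : h 0 = 1 := hinit 0 (by norm_num)
            have e1 : h 1 = 1 := hinit 1 le_rfl
            rw [hC]
            norm_num [e0, e1]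
          · have hge : 2 ≤ h ((m : ℤ) + 1) := h2 _ (by omega)
            rw [hC]; omega
        -- G1 : h(2(m+1)+1) = m+2
        have G1 : h (2 * ((m : ℤ) + 1) + 1) = (m + 1) + 1 := by
          have harg : (2 : ℤ) ≤ 2 * ((m : ℤ) + 1) + 1 := by omega
          rw [hrec _ harg]
          have e1 : 2 * ((m : ℤ) + 1) + 1 - 1 = 2 * ((m : ℤ) + 1) := by ring
          have e2 : 2 * ((m : ℤ) + 1) + 1 - 2 = 2 * (m : ℤ) + 1 := by ring
          rw [e1, e2, A]
          have hbig : (2 * (m + 1) : ℤ) ≤ (h (2 * ((m : ℤ) + 1)) : ℤ) := by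
            exact_mod_cast G2
          have : 2 * ((m : ℤ) + 1) + 1 - (h (2 * ((m : ℤ) + 1)) : ℤ) ≤ 1 := by
            push_cast at hbig ⊢; omega
          rw [hinit _ this]
          omega
        -- G3 : h(2(m+1)+2) = h(2(m+1)) + h(m+2)
        have G3 : h (2 * ((m : ℤ) + 1) + 2) = h (2 * ((m : ℤ) + 1)) + h (((m : ℤ) + 1) + 1) := by
          have harg : (2 : ℤ) ≤ 2 * ((m : ℤ) + 1) + 2 := by omega
          rw [hrec _ harg]
          have e1 : 2 * ((m : ℤ) + 1) + 2 - 1 = 2 * ((m : ℤ) + 1) + 1 := by ring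
          have e2 : 2 * ((m : ℤ) + 1) + 2 - 2 = 2 * ((m : ℤ) + 1) := by ring
          rw [e1, e2, G1]
          have e3 : 2 * ((m : ℤ) + 1) + 2 - ((m + 1 + 1 : ℕ) : ℤ) = ((m : ℤ) + 1) + 1 := by
            push_cast; ring
          rw [e3]
          omega
        rw [hcast]
        exact ⟨G1, G2, G3⟩
  -- integer version of the even recurrence
  have Cint : ∀ m : ℤ, 1 ≤ m → h (2 * m) = h (2 * m - 2) + h m := by
    intro m hm
    lift m to ℕ using (by omega) with p
    have hp : 1 ≤ p := by exact_mod_cast hm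
    obtain ⟨q, rfl⟩ : ∃ q, p = q + 1 := ⟨p - 1, by omega⟩
    have C := (key q).2.2
    have e1 : 2 * ((q + 1 : ℕ) : ℤ) = 2 * (q : ℤ) + 2 := by push_cast; ring
    have e2 : 2 * ((q + 1 : ℕ) : ℤ) - 2 = 2 * (q : ℤ) := by push_cast; ring
    have e3 : ((q + 1 : ℕ) : ℤ) = (q : ℤ) + 1 := by push_cast; ring
    rw [e1, e3, C]
    have e4 : (2 * (q : ℤ) + 2 - 2) = 2 * (q : ℤ) := by ring
    rw [e4]
  intro k n hn
  induction k with
  | zero =>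
    simp only [pow_zero, Finset.sum_range_one, ht0, one_mul, Nat.cast_zero]
    have e : (2 : ℤ) ^ (0 + 1) * (n : ℤ) + 1 - 2 * 0 = 2 * (n : ℤ) + 1 := by ring
    rw [e, (key n).1]
    push_cast; ring
  | succ k ih =>
    rw [← ih]
    have e : (2 : ℕ) ^ (k + 1) = 2 * 2 ^ k := by ring
    rw [e, pairSum (fun i => t i * (h (2 ^ (k + 1 + 1) * (n : ℤ) + 2 ^ (k + 1) - 2 * i) : ℤ))]
    refine Finset.sum_congr rfl fun j hj => ?_
    have hj' : (j : ℤ) ≤ 2 ^ k - 1 := by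
      have := Finset.mem_range.mp hj
      have : (j : ℤ) < 2 ^ k := by exact_mod_cast this
      omega
    have hn' : (1 : ℤ) ≤ (n : ℤ) := by exact_mod_cast hn
    set M : ℤ := 2 ^ (k + 1) * (n : ℤ) + 2 ^ k - 2 * (j : ℤ) with hM
    have h2k : (1 : ℤ) ≤ 2 ^ k := by
      have : (1 : ℕ) ≤ 2 ^ k := Nat.one_le_two_pow
      exact_mod_cast this
    have hMpos : 1 ≤ M := by
      have hpow : (2 : ℤ) ^ (k + 1) = 2 * 2 ^ k := by ring
      have : (2 : ℤ) ^ (k + 1) * 1 ≤ 2 ^ (k + 1) * (n : ℤ) := by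
        apply mul_le_mul_of_nonneg_left hn' (by positivity)
      rw [hM]
      nlinarith
    have hc := Cint M hMpos
    have a1 : (2 : ℤ) ^ (k + 1 + 1) * (n : ℤ) + 2 ^ (k + 1) - 2 * ((2 * j : ℕ) : ℤ) = 2 * M := by
      rw [hM]; push_cast; ring
    have a2 : (2 : ℤ) ^ (k + 1 + 1) * (n : ℤ) + 2 ^ (k + 1) - 2 * ((2 * j + 1 : ℕ) : ℤ)
        = 2 * M - 2 := by
      rw [hM]; push_cast; ring
    simp only [a1, a2, hte j, hto j, hc]
    push_cast
    ring
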